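/- Let A be an n×m real matrix of rank r ≥ 1. Then there exist index sets Î ⊆ {1, …, n} and Ĵ ⊆ {1, …, m} with |Î| = |Ĵ| = r such that the r×r submatrix Â = A(Î, Ĵ) is invertible and A = B Â^{−1} C^T, where B = A(:, Ĵ) is the n×r matrix formed by the columns of A indexed by Ĵ and C^T = A(Î, :) is the r×m matrix formed by the rows of A indexed by Î. In other words, every rank-r matrix admits a skeleton (cross) decomposition through a nonsingular r×r submatrix built from r of its rows and r of its columns. -/

import Mathlib

open Matrix Submodule

/-- From a matrix of rank `r`, one can select `r` columns that are linearly independent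
and span the column space. -/
lemma exists_cols {p q r : ℕ} (M : Matrix (Fin p) (Fin q) ℝ) (h : M.rank = r) :
    ∃ κ : Fin r → Fin q, Function.Injective κ ∧
      LinearIndependent ℝ (fun k => Mᵀ (κ k)) ∧
      span ℝ (Set.range (fun k => Mᵀ (κ k))) = span ℝ (Set.range Mᵀ) := by
  obtain ⟨s, hs_sub, hs_span, hs_li⟩ := exists_linearIndependent ℝ (Set.range Mᵀ)
  have hfin : s.Finite := hs_li.setFinite
  haveI : Fintype s := hfin.fintype
  have hcard : s.toFinset.card = r := by
    have := finrank_span_set_eq_card hs_li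
    rw [hs_span, show Set.range (Mᵀ : Fin q → Fin p → ℝ) = Set.range M.col from rfl,
      ← Matrix.rank_eq_finrank_span_cols, h] at this
    omega
  -- an equiv `Fin r ≃ s`
  have : Fintype.card s = r := by rwa [← Set.toFinset_card]
  obtain ⟨e⟩ : Nonempty (Fin r ≃ s) := ⟨(Fintype.equivFinOfCardEq this).symm⟩
  -- choose column indices
  have hchoice : ∀ k : Fin r, ∃ j : Fin q, Mᵀ j = (e k : Fin p → ℝ) := fun k =>
    hs_sub (e k).2
  choose κ hκ using hchoice
  have hcomp : (fun k => Mᵀ (κ k)) = fun k => ((e k : s) : Fin p → ℝ) := by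
    funext k; exact hκ k
  have hinj : Function.Injective fun k => Mᵀ (κ k) := by
    rw [hcomp]
    exact Subtype.val_injective.comp e.injective
  refine ⟨κ, fun a b hab => hinj (show Mᵀ (κ a) = Mᵀ (κ b) by rw [hab]), ?_, ?_⟩
  · rw [hcomp]
    exact hs_li.comp e e.injective
  · rw [hcomp]
    have : Set.range (fun k => ((e k : s) : Fin p → ℝ)) = s := by
      rw [show (fun k => ((e k : s) : Fin p → ℝ)) = Subtype.val ∘ e from rfl,
        Set.range_comp, e.range_eq_univ, Set.image_univ, Subtype.range_coe]
    rw [this, hs_span]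

/-- Skeleton (cross) decomposition: every real `n × m` matrix of rank `r ≥ 1` can be
written as `A = B Â⁻¹ Cᵀ`, where `Â` is a nonsingular `r × r` submatrix of `A` located
at the intersection of `r` rows (indexed by `ι`) and `r` columns (indexed by `κ`),
`B` consists of those `r` columns of `A`, and `Cᵀ` consists of those `r` rows of `A`. -/
theorem skeleton_decomposition (n m r : ℕ) (hr : 1 ≤ r)
    (A : Matrix (Fin n) (Fin m) ℝ) (hrank : A.rank = r) :
    ∃ (ι : Fin r → Fin n) (κ : Fin r → Fin m),
      Function.Injective ι ∧ Function.Injective κ ∧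
        IsUnit (A.submatrix ι κ) ∧
        A = A.submatrix id κ * (A.submatrix ι κ)⁻¹ * A.submatrix ι id := by
  obtain ⟨κ, hκinj, hκli, hκspan⟩ := exists_cols A hrank
  set B : Matrix (Fin n) (Fin r) ℝ := A.submatrix id κ with hB
  have hBT : ∀ k, Bᵀ k = Aᵀ (κ k) := fun k => rfl
  have hBTfun : (Bᵀ : Fin r → Fin n → ℝ) = fun k => Aᵀ (κ k) := funext hBT
  -- rank of B is r
  have hBrank : B.rank = r := by
    rw [Matrix.rank_eq_finrank_span_cols,
      show Set.range B.col = Set.range (Bᵀ : Fin r → Fin n → ℝ) from rfl, hBTfun]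
    rw [show Set.range (fun k => Aᵀ (κ k)) = Set.range fun k => Aᵀ (κ k) from rfl]
    rw [hκspan, show Set.range (Aᵀ : Fin m → Fin n → ℝ) = Set.range A.col from rfl,
      ← Matrix.rank_eq_finrank_span_cols, hrank]
  -- select r rows of B
  have hBTrank : (Bᵀ).rank = r := by rwa [Matrix.rank_transpose]
  obtain ⟨ι, hιinj, hιli, -⟩ := exists_cols Bᵀ hBTrank
  have hrows : (fun k => (Bᵀ)ᵀ (ι k)) = fun k => B (ι k) := by
    funext k; rw [Matrix.transpose_transpose]
  rw [hrows] at hιli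
  set Ahat : Matrix (Fin r) (Fin r) ℝ := A.submatrix ι κ with hAhat
  have hAhatB : Ahat = B.submatrix ι id := by
    rw [hAhat, hB, Matrix.submatrix_submatrix]; rfl
  have hunit : IsUnit Ahat := by
    rw [← Matrix.linearIndependent_rows_iff_isUnit]
    have : ∀ k, Ahat k = B (ι k) := by
      intro k; funext j; rw [hAhatB]; rfl
    rw [funext this]
    exact hιli
  -- A = B * X for some X
  have hX : ∃ X : Matrix (Fin r) (Fin m) ℝ, A = B * X := by
    have hmem : ∀ j : Fin m, Aᵀ j ∈ span ℝ (Set.range fun k => Aᵀ (κ k)) := by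
      intro j
      rw [hκspan]
      exact subset_span ⟨j, rfl⟩
    have hc : ∀ j : Fin m, ∃ c : Fin r → ℝ, ∑ k, c k • Aᵀ (κ k) = Aᵀ j := fun j =>
      mem_span_range_iff_exists_fun ℝ |>.mp (hmem j)
    choose c hc using hc
    refine ⟨Matrix.of fun k j => c j k, ?_⟩
    ext i j
    rw [Matrix.mul_apply]
    have := congrFun (hc j) i
    simp only [Finset.sum_apply, Pi.smul_apply, smul_eq_mul, Matrix.transpose_apply] at this
    rw [← this]
    apply Finset.sum_congr rfl
    intro k _
    simp [hB, Matrix.transpose_apply, mul_comm]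
  obtain ⟨X, hXeq⟩ := hX
  -- A.submatrix ι id = Ahat * X
  have hrowsub : A.submatrix ι id = Ahat * X := by
    rw [hAhatB]
    ext k j
    rw [Matrix.submatrix_apply, hXeq, Matrix.mul_apply, Matrix.mul_apply]
    apply Finset.sum_congr rfl
    intro l _
    rfl
  refine ⟨ι, κ, hιinj, hκinj, hunit, ?_⟩
  rw [hrowsub, ← Matrix.mul_assoc,
    Matrix.nonsing_inv_mul_cancel_right _ _ ((Matrix.isUnit_iff_isUnit_det _).mp hunit), ← hXeq]
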